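/- Let a < b be reals and 0 < h < b − a. Then for every Lebesgue measurable set H ⊆ [a, b] with λ(H) = h one has a + h/2 ≤ Avg(H) ≤ b − h/2; moreover Avg([a, a+h]) = a + h/2 and Avg([b−h, b]) = b − h/2, so these bounds are the minimum and maximum of Avg over all Lebesgue measurable H ⊆ [a,b] with λ(H) = h. -/

import Mathlib

open MeasureTheory

/-- The mean `Avg` by Lebesgue measure. -/
noncomputable def avg (H : Set ℝ) : ℝ := (∫ x in H, x) / (volume H).toReal

/-- Key comparison lemma: if `H` and `I` have equal finite volume, every point of
`H \ I` is `≥ c` and every point of `I \ H` is `≤ c`, then `∫_I x ≤ ∫_H x`. -/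
lemma integral_id_le_integral_id (H I : Set ℝ) (c : ℝ)
    (hH : MeasurableSet H) (hI : MeasurableSet I)
    (hvol : volume H = volume I) (hfin : volume H ≠ ⊤)
    (hintH : IntegrableOn (fun x : ℝ => x) H volume)
    (hintI : IntegrableOn (fun x : ℝ => x) I volume)
    (hHc : ∀ x ∈ H \ I, c ≤ x) (hIc : ∀ x ∈ I \ H, x ≤ c) :
    (∫ x in I, x) ≤ ∫ x in H, x := by
  have hfinI : volume I ≠ ⊤ := hvol ▸ hfin
  have hHdI : volume (H \ I) ≠ ⊤ :=
    (lt_of_le_of_lt (measure_mono Set.diff_subset) hfin.lt_top).ne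
  have hIdH : volume (I \ H) ≠ ⊤ :=
    (lt_of_le_of_lt (measure_mono Set.diff_subset) hfinI.lt_top).ne
  have hinterfin : volume (H ∩ I) ≠ ⊤ :=
    (lt_of_le_of_lt (measure_mono Set.inter_subset_left) hfin.lt_top).ne
  have h1 : volume (H ∩ I) + volume (H \ I) = volume H := measure_inter_add_diff H hI
  have h2 : volume (I ∩ H) + volume (I \ H) = volume I := measure_inter_add_diff I hH
  have hIH : I ∩ H = H ∩ I := Set.inter_comm I H
  have hdiffeq : volume (H \ I) = volume (I \ H) := by
    have : volume (H ∩ I) + volume (H \ I) = volume (H ∩ I) + volume (I \ H) := by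
      rw [h1, hvol, ← h2, hIH]
    exact (ENNReal.add_right_inj hinterfin).mp this
  -- lower bound on ∫_{H\I}
  have hb1 : c * (volume (H \ I)).toReal ≤ ∫ x in H \ I, x := by
    have := setIntegral_ge_of_const_le_real (hH.diff hI) hHdI hHc (hintH.mono_set Set.diff_subset)
    exact this
  -- upper bound on ∫_{I\H}
  have hb2 : (∫ x in I \ H, x) ≤ c * (volume (I \ H)).toReal := by
    have := setIntegral_mono_on (μ := volume) (f := fun x : ℝ => x) (g := fun _ : ℝ => c)
      (hintI.mono_set Set.diff_subset)
      (integrableOn_const hIdH) (hI.diff hH) hIc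
    have h' : (∫ x in I \ H, x) ≤ c * volume.real (I \ H) := by
      simpa [setIntegral_const, mul_comm] using this
    exact h'
  have e1 : (∫ x in H ∩ I, x) + (∫ x in H \ I, x) = ∫ x in H, x :=
    integral_inter_add_diff hI hintH
  have e2 : (∫ x in I ∩ H, x) + (∫ x in I \ H, x) = ∫ x in I, x :=
    integral_inter_add_diff hH hintI
  have : (∫ x in I, x) ≤ (∫ x in H ∩ I, x) + c * (volume (I \ H)).toReal := by
    rw [← e2, hIH]
    exact add_le_add_right hb2 _
  refine this.trans ?_
  rw [← e1]
  refine add_le_add_right ?_ _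
  rw [← hdiffeq] at *
  exact le_trans (le_of_eq rfl) hb1

lemma integral_id_Icc (u v : ℝ) (huv : u ≤ v) :
    (∫ x in Set.Icc u v, x) = (v ^ 2 - u ^ 2) / 2 := by
  rw [MeasureTheory.integral_Icc_eq_integral_Ioc,
    ← intervalIntegral.integral_of_le huv]
  exact integral_id

theorem avg_min_max_on_subsets_of_Icc (a b h : ℝ) (hab : a < b)
    (hh0 : 0 < h) (hhba : h < b - a) :
    (∀ H : Set ℝ, H ⊆ Set.Icc a b → MeasurableSet H →
      volume H = ENNReal.ofReal h →
      a + h / 2 ≤ avg H ∧ avg H ≤ b - h / 2) ∧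
    avg (Set.Icc a (a + h)) = a + h / 2 ∧
    avg (Set.Icc (b - h) b) = b - h / 2 := by
  have hah : a ≤ a + h := by linarith
  have hbh : b - h ≤ b := by linarith
  have hIvol : volume (Set.Icc a (a + h)) = ENNReal.ofReal h := by
    rw [Real.volume_Icc]; ring_nf
  have hJvol : volume (Set.Icc (b - h) b) = ENNReal.ofReal h := by
    rw [Real.volume_Icc]; ring_nf
  have hIint : (∫ x in Set.Icc a (a + h), x) = ((a + h) ^ 2 - a ^ 2) / 2 :=
    integral_id_Icc a (a + h) hah
  have hJint : (∫ x in Set.Icc (b - h) b, x) = (b ^ 2 - (b - h) ^ 2) / 2 :=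
    integral_id_Icc (b - h) b hbh
  have havgI : avg (Set.Icc a (a + h)) = a + h / 2 := by
    rw [avg, hIvol, hIint, ENNReal.toReal_ofReal hh0.le]
    field_simp; ring
  have havgJ : avg (Set.Icc (b - h) b) = b - h / 2 := by
    rw [avg, hJvol, hJint, ENNReal.toReal_ofReal hh0.le]
    field_simp; ring
  refine ⟨?_, havgI, havgJ⟩
  intro H hHsub hHmeas hHvol
  have hfin : volume H ≠ ⊤ := by rw [hHvol]; exact ENNReal.ofReal_ne_top
  have hintab : IntegrableOn (fun x : ℝ => x) (Set.Icc a b) volume :=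
    (continuous_id.continuousOn).integrableOn_Icc
  have hintH : IntegrableOn (fun x : ℝ => x) H volume := hintab.mono_set hHsub
  have hintI : IntegrableOn (fun x : ℝ => x) (Set.Icc a (a + h)) volume :=
    hintab.mono_set (Set.Icc_subset_Icc le_rfl (by linarith))
  have hintJ : IntegrableOn (fun x : ℝ => x) (Set.Icc (b - h) b) volume :=
    hintab.mono_set (Set.Icc_subset_Icc (by linarith) le_rfl)
  have hHtoReal : (volume H).toReal = h := by
    rw [hHvol, ENNReal.toReal_ofReal hh0.le]
  -- lower bound
  have hlow : (∫ x in Set.Icc a (a + h), x) ≤ ∫ x in H, x := by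
    apply integral_id_le_integral_id H (Set.Icc a (a + h)) (a + h) hHmeas measurableSet_Icc
      (by rw [hHvol, hIvol]) hfin hintH hintI
    · rintro x ⟨hxH, hxI⟩
      rcases hHsub hxH with ⟨hxa, hxb⟩
      by_contra hc
      exact hxI ⟨hxa, le_of_not_ge hc⟩
    · rintro x ⟨⟨_, hx2⟩, _⟩
      exact hx2
  have hup : (∫ x in H, x) ≤ ∫ x in Set.Icc (b - h) b, x := by
    apply integral_id_le_integral_id (Set.Icc (b - h) b) H (b - h) measurableSet_Icc hHmeas
      (by rw [hHvol, hJvol]) (by rw [hJvol]; exact ENNReal.ofReal_ne_top) hintJ hintH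
    · rintro x ⟨⟨hx1, _⟩, _⟩
      exact hx1
    · rintro x ⟨hxH, hxJ⟩
      rcases hHsub hxH with ⟨hxa, hxb⟩
      by_contra hc
      exact hxJ ⟨le_of_not_ge hc, hxb⟩
  constructor
  · rw [avg, hHtoReal, ← havgI, avg, hIvol, hIint, ENNReal.toReal_ofReal hh0.le]
    apply div_le_div_of_nonneg_right ?_ hh0.le |>.trans_eq rfl
    · rw [← hIint]; exact hlow
  · rw [avg, hHtoReal, ← havgJ, avg, hJvol, hJint, ENNReal.toReal_ofReal hh0.le]
    apply div_le_div_of_nonneg_right ?_ hh0.le |>.trans_eq rfl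
    · rw [← hJint]; exact hup
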